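/- Let x ∈ F_2^n and let y be obtained from x by deleting a 0 at position k. Let v_L be the number of ones in x strictly before position k and v_R the number of ones strictly after position k. Then for any integer v with −v_R ≤ v ≤ v_L, the unique vector obtained by inserting a 0 into y immediately after its (v_L − v)-th one has VT syndrome equal to (Σ_{i=1}^n i·x_i) + v. -/

import Mathlib

/-- The VT syndrome Σ_{i=1}^m i·x_i of a binary word, over the integers. -/
def listSynd (x : List Bool) : ℤ :=
  ∑ i ∈ Finset.range x.length, ((i : ℤ) + 1) * (if x.getD i false then 1 else 0)

/-- `insertAt y v j` inserts the block `v` into `y` at (0-indexed) position `j`. -/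
def insertAt (y v : List Bool) (j : ℕ) : List Bool :=
  y.take j ++ v ++ y.drop j

lemma count_eq_sum (t : List Bool) :
    (t.count true : ℤ) = ∑ i ∈ Finset.range t.length, (if t.getD i false then 1 else 0) := by
  induction t with
  | nil => simp
  | cons b t ih =>
    rw [List.length_cons, Finset.sum_range_succ']
    simp only [List.getD_cons_succ, List.getD_cons_zero, List.count_cons, ← ih]
    cases b <;> simp

lemma listSynd_cons (b : Bool) (t : List Bool) :
    listSynd (b :: t) = (if b then 1 else 0) + (t.count true : ℤ) + listSynd t := by
  unfold listSynd
  rw [List.length_cons, Finset.sum_range_succ']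
  simp only [List.getD_cons_succ, List.getD_cons_zero]
  push_cast
  rw [count_eq_sum]
  have : ∀ i ∈ Finset.range t.length,
      ((i : ℤ) + 1 + 1) * (if t.getD i false then 1 else 0)
        = ((i : ℤ) + 1) * (if t.getD i false then 1 else 0)
          + (if t.getD i false then 1 else 0) := by
    intro i _; ring
  rw [Finset.sum_congr rfl this, Finset.sum_add_distrib]
  ring

lemma count_insertAt_false (t : List Bool) (j : ℕ) :
    (insertAt t [false] j).count true = t.count true := by
  unfold insertAt
  rw [List.count_append, List.count_append]
  have : (t.take j).count true + (t.drop j).count true = t.count true := by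
    rw [← List.count_append, List.take_append_drop]
  simp [this]

lemma listSynd_insertAt_false (y : List Bool) (j : ℕ) :
    listSynd (insertAt y [false] j) = listSynd y + ((y.drop j).count true : ℤ) := by
  induction y generalizing j with
  | nil =>
    have h : insertAt ([] : List Bool) [false] j = [false] := by simp [insertAt]
    rw [h]
    simp [listSynd_cons, listSynd]
  | cons b t ih =>
    cases j with
    | zero =>
      have h : insertAt (b :: t) [false] 0 = false :: b :: t := by simp [insertAt]
      rw [h, listSynd_cons]
      simp [add_comm]
    | succ j =>
      have h : insertAt (b :: t) [false] (j + 1) = b :: insertAt t [false] j := by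
        simp [insertAt]
      rw [h, listSynd_cons, ih, count_insertAt_false, List.drop_succ_cons,
        listSynd_cons]
      ring

theorem mismatched_VT_insert_zero (x : List Bool) (k : ℕ) (hk : k < x.length)
    (hzero : x.getD k true = false) (v : ℤ)
    (hvlo : -(((x.drop (k + 1)).count true : ℤ)) ≤ v)
    (hvhi : v ≤ ((x.take k).count true : ℤ)) :
    ∀ p : ℕ, p ≤ (x.eraseIdx k).length →
      -- the prefix of length p of y = eraseIdx x k contains exactly v_L − v ones,
      ((((x.eraseIdx k).take p).count true : ℤ) = ((x.take k).count true : ℤ) - v) →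
      -- and p is immediately after a one (or at the front):
      (p = 0 ∨ (x.eraseIdx k).getD (p - 1) false = true) →
      listSynd (insertAt (x.eraseIdx k) [false] p) = listSynd x + v := by
  intro p _ hcount _
  set y := x.eraseIdx k with hy
  have hyx : y = x.take k ++ x.drop (k + 1) := List.eraseIdx_eq_take_drop_succ x k
  have hlen : (x.take k).length = k := by
    rw [List.length_take]; omega
  -- x = insertAt y [false] k
  have hxk : x.getD k false = false := by
    rw [List.getD_eq_getElem?_getD] at hzero ⊢
    rw [List.getElem?_eq_getElem hk] at hzero ⊢
    exact hzero
  have hxins : x = insertAt y [false] k := by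
    unfold insertAt
    rw [hyx, List.take_left' hlen, List.drop_left' hlen]
    have := List.getElem_cons_drop hk
    have hfalse : x[k] = false := by
      rw [List.getD_eq_getElem?_getD, List.getElem?_eq_getElem hk] at hxk
      exact hxk
    rw [hfalse] at this
    calc x = x.take k ++ x.drop k := (List.take_append_drop k x).symm
    _ = x.take k ++ [false] ++ x.drop (k + 1) := by rw [← this]; simp
  -- syndrome of x
  have hsx : listSynd x = listSynd y + ((x.drop (k + 1)).count true : ℤ) := by
    conv_lhs => rw [hxins]
    rw [listSynd_insertAt_false, hyx, List.drop_left' hlen]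
  -- counting
  have hcy : (y.count true : ℤ)
      = ((x.take k).count true : ℤ) + ((x.drop (k + 1)).count true : ℤ) := by
    rw [hyx, List.count_append]; push_cast; ring
  have hsplit : ((y.take p).count true : ℤ) + ((y.drop p).count true : ℤ)
      = (y.count true : ℤ) := by
    rw [← Nat.cast_add, ← List.count_append, List.take_append_drop]
  have hdp : ((y.drop p).count true : ℤ) = ((x.drop (k + 1)).count true : ℤ) + v := by
    rw [hcount] at hsplit
    omega
  rw [listSynd_insertAt_false, hdp, hsx]
  ring
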